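/- The collection of cones {σ_J : J ⊆ I} covers the whole space: every vector v ∈ ℝ^n lies in σ_J for some subset J ⊆ I. Equivalently, the fan Σ = {σ_{J,K} : J, K ⊆ I disjoint} is complete, i.e. its support ⋃_{J⊆I} σ_J equals ℝ^n. -/
import Mathlib


open Matrix

/-- The `j`-th simple coroot `α^∨_j := Σ_i C_{ij} e_i`, i.e. the `j`-th column of `C`. -/
def acoroot {n : ℕ} (C : Matrix (Fin n) (Fin n) ℝ) (j : Fin n) : Fin n → ℝ :=
  fun i => C i j

/-- The cone `σ_{J,K}` of nonnegative linear combinations of the `-α^∨_j` (`j ∈ J`)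
and the standard basis vectors `e_k` (`k ∈ K`). -/
def sigmaCone {n : ℕ} (C : Matrix (Fin n) (Fin n) ℝ) (J K : Finset (Fin n)) :
    Set (Fin n → ℝ) :=
  {v | ∃ x y : Fin n → ℝ, (∀ j ∈ J, 0 ≤ x j) ∧ (∀ k ∈ K, 0 ≤ y k) ∧
    v = (∑ j ∈ J, x j • (-acoroot C j)) + ∑ k ∈ K, y k • (Pi.single k 1 : Fin n → ℝ)}

theorem stmt_8
    (n : ℕ) (hn : 1 ≤ n) (C : Matrix (Fin n) (Fin n) ℝ)
    (hdiag : ∀ i, C i i = 2)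
    (hoff : ∀ i j, i ≠ j → C i j ≤ 0)
    (hprin : ∀ S : Finset (Fin n), S.Nonempty →
      IsUnit (C.submatrix (fun a : S => (a : Fin n)) (fun a : S => (a : Fin n))) ∧
      ∀ i j : S,
        0 ≤ (C.submatrix (fun a : S => (a : Fin n)) (fun a : S => (a : Fin n)))⁻¹ i j) :
    (⋃ J : Finset (Fin n), sigmaCone C J Jᶜ) = Set.univ := by
  classical
  have hne : (Finset.univ : Finset (Fin n)).Nonempty := ⟨⟨0, hn⟩, Finset.mem_univ _⟩
  obtain ⟨hU, hInv⟩ := hprin Finset.univ hne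
  -- transfer to C itself
  set e : {a // a ∈ (Finset.univ : Finset (Fin n))} ≃ Fin n :=
    Equiv.subtypeUnivEquiv (fun x => Finset.mem_univ x) with he
  have hsub : C.submatrix (fun a : (Finset.univ : Finset (Fin n)) => (a : Fin n))
      (fun a : (Finset.univ : Finset (Fin n)) => (a : Fin n)) = C.submatrix e e := rfl
  have hUC : IsUnit C := by
    rw [hsub] at hU
    exact (Matrix.isUnit_submatrix_equiv e e).mp hU
  have hCinv_nonneg : ∀ i j, 0 ≤ C⁻¹ i j := by
    intro i j
    have := hInv (e.symm i) (e.symm j)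
    rw [hsub, Matrix.inv_submatrix_equiv] at this
    simpa using this
  have hCC : C * C⁻¹ = 1 := Matrix.mul_nonsing_inv C (Matrix.isUnit_iff_isUnit_det C |>.mp hUC)
  rw [Set.eq_univ_iff_forall]
  intro v
  -- the feasible starting point
  set w : Fin n → ℝ := fun i => max (-v i) 0 with hw
  set x₀ : Fin n → ℝ := C⁻¹ *ᵥ w with hx₀
  have hx₀nn : ∀ i, 0 ≤ x₀ i := by
    intro i
    rw [hx₀]
    simp only [Matrix.mulVec, dotProduct]
    apply Finset.sum_nonneg
    intro j _
    exact mul_nonneg (hCinv_nonneg i j) (le_max_right _ _)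
  have hCx₀ : C *ᵥ x₀ = w := by
    rw [hx₀, Matrix.mulVec_mulVec, hCC, Matrix.one_mulVec]
  -- the compact feasible region
  set D : Set (Fin n → ℝ) :=
    {x | (∀ i, x i ∈ Set.Icc 0 (x₀ i)) ∧ ∀ i, 0 ≤ (C *ᵥ x) i + v i} with hD
  have hx₀D : x₀ ∈ D := by
    constructor
    · intro i; exact ⟨hx₀nn i, le_refl _⟩
    · intro i; rw [hCx₀]
      have : -v i ≤ w i := le_max_left _ _
      simp only [hw] at this ⊢
      linarith
  have hDco : IsCompact D := by
    have h1 : IsCompact (Set.pi Set.univ fun i => Set.Icc (0:ℝ) (x₀ i)) :=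
      isCompact_univ_pi fun i => isCompact_Icc
    have h2 : IsClosed {x : Fin n → ℝ | ∀ i, 0 ≤ (C *ᵥ x) i + v i} := by
      have : {x : Fin n → ℝ | ∀ i, 0 ≤ (C *ᵥ x) i + v i} =
          ⋂ i, {x : Fin n → ℝ | 0 ≤ (C *ᵥ x) i + v i} := by
        ext x; simp
      rw [this]
      apply isClosed_iInter
      intro i
      have hc : Continuous fun x : Fin n → ℝ => (C *ᵥ x) i + v i := by
        simp only [Matrix.mulVec, dotProduct]
        fun_prop
      exact isClosed_le continuous_const hc
    have : D = (Set.pi Set.univ fun i => Set.Icc (0:ℝ) (x₀ i)) ∩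
        {x : Fin n → ℝ | ∀ i, 0 ≤ (C *ᵥ x) i + v i} := by
      ext x
      simp only [hD, Set.mem_setOf_eq, Set.mem_inter_iff, Set.mem_univ_pi]
    rw [this]
    exact h1.inter_right h2
  obtain ⟨z, hzD, hzmin⟩ := hDco.exists_isMinOn ⟨x₀, hx₀D⟩
    (continuousOn_finset_sum Finset.univ fun i _ => (continuous_apply i).continuousOn :
      ContinuousOn (fun x : Fin n → ℝ => ∑ i, x i) D)
  obtain ⟨hzbox, hzfeas⟩ := hzD
  -- complementarity
  have hcomp : ∀ i, z i = 0 ∨ (C *ᵥ z) i + v i = 0 := by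
    intro i
    by_contra hcon
    push_neg at hcon
    obtain ⟨hzi, hyi⟩ := hcon
    have hzi' : 0 < z i := lt_of_le_of_ne (hzbox i).1 (Ne.symm hzi)
    have hyi' : 0 < (C *ᵥ z) i + v i := lt_of_le_of_ne (hzfeas i) (Ne.symm hyi)
    set ε : ℝ := min (z i) (((C *ᵥ z) i + v i) / 2) with hε
    have hεpos : 0 < ε := lt_min hzi' (by linarith)
    set z' : Fin n → ℝ := Function.update z i (z i - ε) with hz'
    have hz'apply : ∀ j, z' j = if j = i then z i - ε else z j := by
      intro j
      by_cases h : j = i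
      · subst h; simp [hz']
      · simp [hz', h]
    have hCz' : ∀ j, (C *ᵥ z') j = (C *ᵥ z) j - ε * C j i := by
      intro j
      simp only [Matrix.mulVec, dotProduct]
      have hterm : ∀ k, C j k * z' k = C j k * z k - (if k = i then ε * C j i else 0) := by
        intro k
        rw [hz'apply k]
        by_cases h : k = i
        · subst h; rw [if_pos rfl, if_pos rfl]; ring
        · rw [if_neg h, if_neg h]; ring
      rw [Finset.sum_congr rfl fun k _ => hterm k, Finset.sum_sub_distrib,
        Finset.sum_ite_eq' Finset.univ i fun _ => ε * C j i, if_pos (Finset.mem_univ i)]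
    have hz'D : z' ∈ D := by
      constructor
      · intro j
        rw [hz'apply j]
        by_cases h : j = i
        · rw [if_pos h]
          subst h
          rw [Set.mem_Icc]
          constructor
          · have : ε ≤ z j := min_le_left _ _
            linarith
          · have := (hzbox j).2
            linarith
        · rw [if_neg h]; exact hzbox j
      · intro j
        rw [hCz' j]
        by_cases h : j = i
        · subst h
          rw [hdiag j]
          have : ε ≤ ((C *ᵥ z) j + v j) / 2 := min_le_right _ _
          linarith
        · have h1 : C j i ≤ 0 := hoff j i h
          have h2 : 0 ≤ (C *ᵥ z) j + v j := hzfeas j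
          nlinarith
    have hsum : (∑ j, z' j) = (∑ j, z j) - ε := by
      rw [← Finset.add_sum_erase Finset.univ z' (Finset.mem_univ i),
          ← Finset.add_sum_erase Finset.univ z (Finset.mem_univ i)]
      have : ∑ j ∈ Finset.univ.erase i, z' j = ∑ j ∈ Finset.univ.erase i, z j := by
        apply Finset.sum_congr rfl
        intro j hj
        rw [hz'apply j, if_neg (Finset.mem_erase.mp hj).1]
      rw [this, hz'apply i, if_pos rfl]
      ring
    have := hzmin hz'D
    simp only [Set.mem_setOf_eq] at this
    rw [hsum] at this
    linarith
  -- assemble the cone membership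
  set J : Finset (Fin n) := Finset.univ.filter (fun i => 0 < z i) with hJ
  have hzoff : ∀ j, j ∉ J → z j = 0 := by
    intro j hj
    simp only [hJ, Finset.mem_filter, Finset.mem_univ, true_and, not_lt] at hj
    exact le_antisymm hj (hzbox j).1
  refine Set.mem_iUnion.mpr ⟨J, z, fun k => (C *ᵥ z) k + v k, ?_, ?_, ?_⟩
  · intro j _; exact (hzbox j).1
  · intro k _; exact hzfeas k
  · funext i
    have hsum2 : (∑ j ∈ J, z j • (-acoroot C j)) i = -(C *ᵥ z) i := by
      rw [Finset.sum_apply]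
      have hvan : ∀ j ∈ Finset.univ, j ∉ J → (fun j => (z j • (-acoroot C j)) i) j = 0 := by
        intro j _ hj
        simp [hzoff j hj]
      rw [Finset.sum_subset (Finset.subset_univ J) hvan]
      have hterm : ∀ j, (z j • (-acoroot C j)) i = -(C i j * z j) := by
        intro j
        simp only [Pi.smul_apply, Pi.neg_apply, smul_eq_mul, acoroot]
        ring
      rw [Finset.sum_congr rfl fun j _ => hterm j, Finset.sum_neg_distrib]
      simp only [Matrix.mulVec, dotProduct]
    have hsum3 : (∑ k ∈ Jᶜ, ((C *ᵥ z) k + v k) • (Pi.single k 1 : Fin n → ℝ)) i =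
        if i ∈ Jᶜ then (C *ᵥ z) i + v i else 0 := by
      rw [Finset.sum_apply]
      have hterm : ∀ k, (((C *ᵥ z) k + v k) • (Pi.single k 1 : Fin n → ℝ)) i =
          if k = i then (C *ᵥ z) k + v k else 0 := by
        intro k
        rw [Pi.smul_apply, Pi.single_apply, smul_eq_mul]
        by_cases h : k = i
        · subst h; rw [if_pos rfl, if_pos rfl, mul_one]
        · rw [if_neg (fun hh : i = k => h hh.symm), if_neg h, mul_zero]
      rw [Finset.sum_congr rfl fun k _ => hterm k,
        Finset.sum_ite_eq' Jᶜ i fun k => (C *ᵥ z) k + v k]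
    rw [Pi.add_apply, hsum2, hsum3]
    by_cases h : i ∈ Jᶜ
    · rw [if_pos h]; ring
    · rw [if_neg h]
      have hiJ : i ∈ J := by simpa [Finset.mem_compl] using h
      have : (C *ᵥ z) i + v i = 0 := by
        rcases hcomp i with h0 | h0
        · exfalso
          simp only [hJ, Finset.mem_filter] at hiJ
          linarith [hiJ.2]
        · exact h0
      linarith
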